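/- Let G be a connected finite simple graph with m edges, x a Perron vector of G, and u* a vertex at which x attains its maximum value x_{u*}. Set A = N(u*), A_0 = {u ∈ A : u has no neighbor in A}, A_+ = A \ A_0, B = V(G) \ (A ∪ {u*}), and write d_A(u) = |N(u) ∩ A|. If ρ(G)² − 2ρ(G) ≥ m − 3, then e(B) ≤ Σ_{u ∈ A_+} (d_A(u) − 2)·x_u/x_{u*} − e(A_+) − 2·Σ_{v ∈ A_0} x_v/x_{u*} + 3. -/

import Mathlib

open Matrix Finset

/-- The spectral radius of a finite simple graph: the largest (real) eigenvalue of its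
adjacency matrix, expressed as the supremum of the set of real eigenvalues. -/
noncomputable def specRad {V : Type*} [Fintype V] (G : SimpleGraph V)
    [DecidableRel G.Adj] : ℝ :=
  sSup {t : ℝ | ∃ x : V → ℝ, x ≠ 0 ∧ (G.adjMatrix ℝ) *ᵥ x = t • x}

/-- `H` is contained in `G` as a (not necessarily induced) subgraph. -/
def ContainsSub {α β : Type*} (H : SimpleGraph α) (G : SimpleGraph β) : Prop :=
  ∃ f : α → β, Function.Injective f ∧ ∀ ⦃a b⦄, H.Adj a b → G.Adj (f a) (f b)

/-- The fan graph `H₇ = K₁ ∨ P₆`: vertex `6` is joined to every vertex of the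
path `0-1-2-3-4-5`. -/
def fanH7 : SimpleGraph (Fin 7) :=
  SimpleGraph.fromRel (fun i j => i = 6 ∨ j = 6 ∨ (j : ℕ) = (i : ℕ) + 1)

/-- A graph is `H₇`-free if it contains no subgraph isomorphic to the fan `H₇`. -/
def H7Free {β : Type*} (G : SimpleGraph β) : Prop := ¬ ContainsSub fanH7 G

/-- `K₃ ∨ kK₁`: the join of a triangle (vertices `0,1,2`) with `k` isolated vertices. -/
def K3Join (k : ℕ) : SimpleGraph (Fin (k + 3)) :=
  SimpleGraph.fromRel (fun i j => (i : ℕ) < 3 ∨ (j : ℕ) < 3)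

instance (k : ℕ) : DecidableRel (K3Join k).Adj := fun a b =>
  decidable_of_iff (a ≠ b ∧ ((a : ℕ) < 3 ∨ (b : ℕ) < 3)) (by
    rw [K3Join, SimpleGraph.fromRel_adj]; tauto)

/-- `K₂ ∨ tK₁`: the join of an edge (vertices `0,1`) with `t` isolated vertices. -/
def K2Join (t : ℕ) : SimpleGraph (Fin (t + 2)) :=
  SimpleGraph.fromRel (fun i j => (i : ℕ) < 2 ∨ (j : ℕ) < 2)

/-- The star `K_{1,s}`: vertex `0` joined to `s` independent vertices. -/
def starGraph (s : ℕ) : SimpleGraph (Fin (s + 1)) :=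
  SimpleGraph.fromRel (fun i j => i = 0 ∨ j = 0)

/-- `K₁ ∨ (K₃ ∪ tK₁)`: vertex `0` joined to all of a triangle `1,2,3` and to `t`
further vertices which are otherwise isolated. -/
def K1JoinK3Union (t : ℕ) : SimpleGraph (Fin (t + 4)) :=
  SimpleGraph.fromRel (fun i j => i = 0 ∨ j = 0 ∨ ((i : ℕ) ≤ 3 ∧ (j : ℕ) ≤ 3))

/-- `C₆^△`: a 6-cycle `0-1-2-3-4-5-0` plus a vertex `6` adjacent to the two adjacent
cycle vertices `0` and `1`. -/
def C6Tri : SimpleGraph (Fin 7) :=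
  SimpleGraph.fromRel (fun i j =>
    ((i : ℕ) < 6 ∧ (j : ℕ) = ((i : ℕ) + 1) % 6) ∨ (i = 6 ∧ (j = 0 ∨ j = 1)))

/-- `F₃`: three triangles `{0,1,2}`, `{0,3,4}`, `{0,5,6}` sharing the common vertex `0`. -/
def friendshipF3 : SimpleGraph (Fin 7) :=
  SimpleGraph.fromRel (fun i j =>
    i = 0 ∨ j = 0 ∨ ((j : ℕ) = (i : ℕ) + 1 ∧ (i : ℕ) % 2 = 1))

/-- The number of edges of `G` with both end vertices in `S`. -/
noncomputable def edgesIn {V : Type*} (G : SimpleGraph V) (S : Set V) : ℕ :=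
  {e ∈ G.edgeSet | ∀ v ∈ e, v ∈ S}.ncard
def subOn {V : Type*} (G : SimpleGraph V) (S : Finset V) : SimpleGraph V where
  Adj a b := a ∈ S ∧ b ∈ S ∧ G.Adj a b
  symm := ⟨fun a b h => ⟨h.2.1, h.1, h.2.2.symm⟩⟩
  loopless := ⟨fun a h => G.loopless.irrefl a h.2.2⟩

@[simp] lemma subOn_adj {V : Type*} (G : SimpleGraph V) (S : Finset V) (a b : V) :
    (subOn G S).Adj a b ↔ a ∈ S ∧ b ∈ S ∧ G.Adj a b := Iff.rfl

instance {V : Type*} [DecidableEq V] (G : SimpleGraph V) [DecidableRel G.Adj] (S : Finset V) :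
    DecidableRel (subOn G S).Adj := fun a b =>
  inferInstanceAs (Decidable (a ∈ S ∧ b ∈ S ∧ G.Adj a b))

lemma two_mul_edgesIn {V : Type*} [Fintype V] [DecidableEq V]
    (G : SimpleGraph V) [DecidableRel G.Adj] (S : Finset V) :
    2 * edgesIn G (S : Set V) = ∑ u ∈ S, (S.filter (G.Adj u)).card := by
  classical
  have hedge : {e ∈ G.edgeSet | ∀ v ∈ e, v ∈ (S : Set V)} = (subOn G S).edgeSet := by
    ext e
    induction e using Sym2.ind with
    | _ a b =>
      simp only [Set.mem_setOf_eq, SimpleGraph.mem_edgeSet, Sym2.mem_iff, subOn_adj,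
        Finset.mem_coe]
      constructor
      · rintro ⟨hab, hm⟩
        exact ⟨hm a (Or.inl rfl), hm b (Or.inr rfl), hab⟩
      · rintro ⟨ha, hb, hab⟩
        exact ⟨hab, by rintro v (rfl | rfl) <;> assumption⟩
  have hcard : edgesIn G (S : Set V) = (subOn G S).edgeFinset.card := by
    rw [edgesIn, hedge, ← SimpleGraph.coe_edgeFinset, Set.ncard_coe_finset]
  have hdeg0 : ∀ u, u ∉ S → (subOn G S).degree u = 0 := by
    intro u hu
    rw [SimpleGraph.degree, Finset.card_eq_zero, Finset.eq_empty_iff_forall_notMem]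
    intro w hw
    rw [SimpleGraph.mem_neighborFinset, subOn_adj] at hw
    exact hu hw.1
  have hdeg : ∀ u ∈ S, (subOn G S).degree u = (S.filter (G.Adj u)).card := by
    intro u hu
    rw [SimpleGraph.degree]
    congr 1
    ext w
    simp only [SimpleGraph.mem_neighborFinset, subOn_adj, Finset.mem_filter]
    tauto
  rw [hcard, ← SimpleGraph.sum_degrees_eq_twice_card_edges,
    ← Finset.sum_subset (Finset.subset_univ S) (fun u _ hu => hdeg0 u hu)]
  exact Finset.sum_congr rfl hdeg


/-- For a connected graph `G` with `m` edges, a Perron vector `x` maximized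
at `u*`, with `A = N(u*)`, `A₀` the isolated part, `A₊ = A ∖ A₀` and `B = V ∖ (A ∪ {u*})`:
if `ρ² − 2ρ ≥ m − 3`, then
`e(B) ≤ Σ_{u ∈ A₊} (d_A(u) − 2)x_u/x_{u*} − e(A₊) − 2Σ_{v ∈ A₀} x_v/x_{u*} + 3`. -/
theorem edges_B_le_eta_sum (m : ℕ) {V : Type} [Fintype V] [DecidableEq V]
    (G : SimpleGraph V) [DecidableRel G.Adj] (hconn : G.Connected)
    (hsize : G.edgeFinset.card = m)
    (x : V → ℝ) (hpos : ∀ v, 0 < x v) (heig : G.adjMatrix ℝ *ᵥ x = specRad G • x)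
    (ustar : V) (hmax : ∀ v, x v ≤ x ustar)
    (A A0 Aplus B : Finset V)
    (hA : A = G.neighborFinset ustar)
    (hA0 : A0 = A.filter (fun u => ∀ w ∈ A, ¬ G.Adj u w))
    (hAplus : Aplus = A \ A0)
    (hB : B = Finset.univ \ insert ustar A)
    (hrho : (specRad G) ^ 2 - 2 * specRad G ≥ (m : ℝ) - 3) :
    (edgesIn G (B : Set V) : ℝ) ≤
      (∑ u ∈ Aplus, (((A.filter (fun w => G.Adj u w)).card : ℝ) - 2) * x u / x ustar)
        - edgesIn G (Aplus : Set V) - 2 * (∑ v ∈ A0, x v / x ustar) + 3 := by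
  classical
  have hc : 0 < x ustar := hpos ustar
  have hustarA : ustar ∉ A := by rw [hA]; simp
  -- splitting sums over the partition {ustar} ∪ A ∪ B
  have hsplit : ∀ f : V → ℝ, ∑ w, f w = f ustar + ∑ w ∈ A, f w + ∑ w ∈ B, f w := by
    intro f
    have h1 : ∑ w ∈ univ \ insert ustar A, f w + ∑ w ∈ insert ustar A, f w
        = ∑ w ∈ univ, f w := Finset.sum_sdiff (Finset.subset_univ _)
    rw [Finset.sum_insert hustarA] at h1
    rw [hB]; linarith
  -- eigen equation rows
  have hrow : ∀ v, specRad G * x v = ∑ w, (if G.Adj v w then x w else 0) := by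
    intro v
    have h1 := congrFun heig v
    rw [SimpleGraph.adjMatrix_mulVec_apply, SimpleGraph.neighborFinset_eq_filter,
      Finset.sum_filter] at h1
    simpa using h1.symm
  have hadjA : ∀ u ∈ A, G.Adj u ustar := by
    intro u hu
    rw [hA, SimpleGraph.mem_neighborFinset] at hu
    exact hu.symm
  have hBnotadj : ∀ w ∈ B, ¬ G.Adj w ustar := by
    intro w hw hadj
    rw [hB, Finset.mem_sdiff, Finset.mem_insert] at hw
    exact hw.2 (Or.inr (by rw [hA, SimpleGraph.mem_neighborFinset]; exact hadj.symm))
  have h1 : specRad G * x ustar = ∑ u ∈ A, x u := by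
    rw [hrow ustar, ← Finset.sum_filter, hA, SimpleGraph.neighborFinset_eq_filter]
  have hrowA : ∀ u ∈ A, specRad G * x u
      = x ustar + ∑ w ∈ A.filter (G.Adj u), x w + ∑ w ∈ B.filter (G.Adj u), x w := by
    intro u hu
    rw [hrow u, hsplit (fun w => if G.Adj u w then x w else 0)]
    simp only [Finset.sum_filter, if_pos (hadjA u hu)]
  -- the second-power row
  have hsq : specRad G * (specRad G * x ustar)
      = (A.card : ℝ) * x ustar + (∑ u ∈ A, ∑ w ∈ A.filter (G.Adj u), x w)
        + (∑ u ∈ A, ∑ w ∈ B.filter (G.Adj u), x w) := by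
    rw [h1, Finset.mul_sum]
    rw [Finset.sum_congr rfl hrowA, Finset.sum_add_distrib, Finset.sum_add_distrib,
      Finset.sum_const, nsmul_eq_mul]
  -- double counting swap
  have hswap : ∀ (s t : Finset V) (f : V → ℝ),
      ∑ u ∈ s, ∑ w ∈ t.filter (G.Adj u), f w
        = ∑ w ∈ t, ((s.filter (G.Adj w)).card : ℝ) * f w := by
    intro s t f
    calc ∑ u ∈ s, ∑ w ∈ t.filter (G.Adj u), f w
        = ∑ u ∈ s, ∑ w ∈ t, if G.Adj u w then f w else 0 := by
          simp [Finset.sum_filter]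
      _ = ∑ w ∈ t, ∑ u ∈ s, if G.Adj u w then f w else 0 := Finset.sum_comm
      _ = ∑ w ∈ t, ((s.filter (G.Adj w)).card : ℝ) * f w := by
          refine Finset.sum_congr rfl fun w hw => ?_
          have hfe : s.filter (fun u => G.Adj u w) = s.filter (G.Adj w) := by
            ext u; simp [Finset.mem_filter, G.adj_comm]
          rw [← Finset.sum_filter, hfe, Finset.sum_const, nsmul_eq_mul]
  have hP := hswap A A x
  have hQ := hswap A B x
  have hQle : ∑ w ∈ B, ((A.filter (G.Adj w)).card : ℝ) * x w
      ≤ ∑ w ∈ B, ((A.filter (G.Adj w)).card : ℝ) * x ustar :=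
    Finset.sum_le_sum fun w _ => mul_le_mul_of_nonneg_left (hmax w) (Nat.cast_nonneg _)
  -- degree decomposition
  have hdeg : ∀ v, (G.degree v : ℝ)
      = (if G.Adj v ustar then (1:ℝ) else 0) + ((A.filter (G.Adj v)).card : ℝ)
        + ((B.filter (G.Adj v)).card : ℝ) := by
    intro v
    have hd : (G.degree v : ℝ) = ∑ w, if G.Adj v w then (1:ℝ) else 0 := by
      rw [Finset.sum_boole, SimpleGraph.degree, SimpleGraph.neighborFinset_eq_filter]
    rw [hd, hsplit (fun w => if G.Adj v w then (1:ℝ) else 0), Finset.sum_boole,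
      Finset.sum_boole]
  -- 2m
  have h2m : 2 * (m : ℝ) = (G.degree ustar : ℝ) + ∑ u ∈ A, (G.degree u : ℝ)
      + ∑ w ∈ B, (G.degree w : ℝ) := by
    have hs := SimpleGraph.sum_degrees_eq_twice_card_edges G
    rw [hsize] at hs
    have hs' := congrArg (fun n : ℕ => (n : ℝ)) hs
    push_cast at hs'
    rw [← hs', hsplit (fun v => (G.degree v : ℝ))]
  have hdegustar : (G.degree ustar : ℝ) = (A.card : ℝ) := by
    rw [SimpleGraph.degree, hA]
  have hdegA : ∀ u ∈ A, (G.degree u : ℝ)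
      = 1 + ((A.filter (G.Adj u)).card : ℝ) + ((B.filter (G.Adj u)).card : ℝ) := by
    intro u hu
    rw [hdeg u, if_pos (hadjA u hu)]
  have hdegB : ∀ w ∈ B, (G.degree w : ℝ)
      = ((A.filter (G.Adj w)).card : ℝ) + ((B.filter (G.Adj w)).card : ℝ) := by
    intro w hw
    rw [hdeg w, if_neg (hBnotadj w hw), zero_add]
  have hsumdegA : ∑ u ∈ A, (G.degree u : ℝ)
      = (A.card : ℝ) + ∑ u ∈ A, ((A.filter (G.Adj u)).card : ℝ)
        + ∑ u ∈ A, ((B.filter (G.Adj u)).card : ℝ) := by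
    rw [Finset.sum_congr rfl hdegA, Finset.sum_add_distrib, Finset.sum_add_distrib,
      Finset.sum_const, nsmul_eq_mul, mul_one]
  have hsumdegB : ∑ w ∈ B, (G.degree w : ℝ)
      = ∑ w ∈ B, ((A.filter (G.Adj w)).card : ℝ) + ∑ w ∈ B, ((B.filter (G.Adj w)).card : ℝ) := by
    rw [Finset.sum_congr rfl hdegB, Finset.sum_add_distrib]
  have hE : ∑ u ∈ A, ((B.filter (G.Adj u)).card : ℝ)
      = ∑ w ∈ B, ((A.filter (G.Adj w)).card : ℝ) := by
    have := hswap A B (fun _ => (1:ℝ))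
    simpa using this
  -- edge counts
  have h2eB : 2 * (edgesIn G (B : Set V) : ℝ) = ∑ w ∈ B, ((B.filter (G.Adj w)).card : ℝ) := by
    exact_mod_cast two_mul_edgesIn G B
  -- A0 / Aplus facts
  have hA0sub : A0 ⊆ A := by rw [hA0]; exact Finset.filter_subset _ _
  have hA0empty : ∀ v ∈ A0, A.filter (G.Adj v) = ∅ := by
    intro v hv
    rw [hA0, Finset.mem_filter] at hv
    rw [Finset.eq_empty_iff_forall_notMem]
    intro w hw
    rw [Finset.mem_filter] at hw
    exact hv.2 w hw.1 hw.2
  have hfiltAplus : ∀ u ∈ Aplus, Aplus.filter (G.Adj u) = A.filter (G.Adj u) := by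
    intro u hu
    rw [hAplus] at hu ⊢
    ext w
    simp only [Finset.mem_filter, Finset.mem_sdiff]
    constructor
    · rintro ⟨⟨hwA, _⟩, hadj⟩; exact ⟨hwA, hadj⟩
    · rintro ⟨hwA, hadj⟩
      refine ⟨⟨hwA, fun hw0 => ?_⟩, hadj⟩
      rw [hA0, Finset.mem_filter] at hw0
      exact hw0.2 u (Finset.mem_sdiff.mp hu).1 hadj.symm
  have hsA : ∑ u ∈ Aplus, ((Aplus.filter (G.Adj u)).card : ℝ)
      = ∑ u ∈ A, ((A.filter (G.Adj u)).card : ℝ) := by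
    rw [Finset.sum_congr rfl (fun u hu => by rw [hfiltAplus u hu])]
    have hsd : ∑ u ∈ A \ A0, ((A.filter (G.Adj u)).card : ℝ)
        + ∑ u ∈ A0, ((A.filter (G.Adj u)).card : ℝ)
        = ∑ u ∈ A, ((A.filter (G.Adj u)).card : ℝ) := Finset.sum_sdiff hA0sub
    have hz : ∑ u ∈ A0, ((A.filter (G.Adj u)).card : ℝ) = 0 :=
      Finset.sum_eq_zero fun v hv => by rw [hA0empty v hv]; simp
    rw [hAplus]; linarith
  have h2eA : 2 * (edgesIn G (Aplus : Set V) : ℝ)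
      = ∑ u ∈ A, ((A.filter (G.Adj u)).card : ℝ) := by
    rw [← hsA]
    exact_mod_cast two_mul_edgesIn G Aplus
  -- rewriting the main sums through Aplus/A0
  have hPA : ∑ u ∈ A, ((A.filter (G.Adj u)).card : ℝ) * x u
      = ∑ u ∈ Aplus, ((A.filter (G.Adj u)).card : ℝ) * x u := by
    have hsd : ∑ u ∈ A \ A0, ((A.filter (G.Adj u)).card : ℝ) * x u
        + ∑ u ∈ A0, ((A.filter (G.Adj u)).card : ℝ) * x u
        = ∑ u ∈ A, ((A.filter (G.Adj u)).card : ℝ) * x u := Finset.sum_sdiff hA0sub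
    have hz : ∑ u ∈ A0, ((A.filter (G.Adj u)).card : ℝ) * x u = 0 :=
      Finset.sum_eq_zero fun v hv => by rw [hA0empty v hv]; simp
    rw [hAplus]; linarith
  have hxA : ∑ u ∈ A, x u = ∑ u ∈ Aplus, x u + ∑ v ∈ A0, x v := by
    rw [hAplus]
    exact (Finset.sum_sdiff hA0sub).symm
  -- the key inequality, multiplied through by x ustar
  have hrhoc : ((m : ℝ) - 3) * x ustar ≤ (specRad G ^ 2 - 2 * specRad G) * x ustar :=
    mul_le_mul_of_nonneg_right hrho hc.le
  have hbridge : (specRad G ^ 2 - 2 * specRad G) * x ustar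
      = specRad G * (specRad G * x ustar) - 2 * (specRad G * x ustar) := by ring
  have hsub : ∑ u ∈ Aplus, (((A.filter (G.Adj u)).card : ℝ) - 2) * x u
      = ∑ u ∈ Aplus, ((A.filter (G.Adj u)).card : ℝ) * x u - 2 * ∑ u ∈ Aplus, x u := by
    rw [Finset.mul_sum, ← Finset.sum_sub_distrib]
    exact Finset.sum_congr rfl fun u _ => by ring
  have hm : (m : ℝ) = (A.card : ℝ) + (edgesIn G (Aplus : Set V) : ℝ)
      + ∑ w ∈ B, ((A.filter (G.Adj w)).card : ℝ) + (edgesIn G (B : Set V) : ℝ) := by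
    linarith [h2m, hdegustar, hsumdegA, hsumdegB, hE, h2eA, h2eB]
  have hmc : (m : ℝ) * x ustar = ((A.card : ℝ) + (edgesIn G (Aplus : Set V) : ℝ)
      + ∑ w ∈ B, ((A.filter (G.Adj w)).card : ℝ) + (edgesIn G (B : Set V) : ℝ)) * x ustar := by
    rw [hm]
  have hQc : ∑ w ∈ B, ((A.filter (G.Adj w)).card : ℝ) * x ustar
      = (∑ w ∈ B, ((A.filter (G.Adj w)).card : ℝ)) * x ustar :=
    (Finset.sum_mul _ _ _).symm
  have key : (edgesIn G (B : Set V) : ℝ) * x ustar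
      ≤ (∑ u ∈ Aplus, (((A.filter (G.Adj u)).card : ℝ) - 2) * x u)
        - (edgesIn G (Aplus : Set V) : ℝ) * x ustar
        - 2 * (∑ v ∈ A0, x v) + 3 * x ustar := by
    linarith [hsq, hP, hQ, hQle, hrhoc, hbridge, h1, hsub, hPA, hxA, hmc, hQc]
  -- divide by x ustar
  have hccast : (edgesIn G (B : Set V) : ℝ)
      = (edgesIn G (B : Set V) : ℝ) * x ustar / x ustar := by field_simp
  rw [hccast]
  have hfin : ((∑ u ∈ Aplus, (((A.filter (G.Adj u)).card : ℝ) - 2) * x u)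
        - (edgesIn G (Aplus : Set V) : ℝ) * x ustar - 2 * (∑ v ∈ A0, x v) + 3 * x ustar)
        / x ustar
      = (∑ u ∈ Aplus, (((A.filter (fun w => G.Adj u w)).card : ℝ) - 2) * x u / x ustar)
        - (edgesIn G (Aplus : Set V) : ℝ) - 2 * (∑ v ∈ A0, x v / x ustar) + 3 := by
    rw [← Finset.sum_div, ← Finset.sum_div]
    field_simp
  rw [← hfin]
  exact (div_le_div_iff_of_pos_right hc).mpr key
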